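/- The Mahler measure of the one-variable polynomial 1 − u − u^{11} + u^{12} − u^{13} − u^{23} + u^{24} equals the Mahler measure of Lehmer's polynomial L(u) = 1 + u − u³ − u⁴ − u⁵ − u⁶ − u⁷ + u⁹ + u^{10}. -/

import Mathlib

open MeasureTheory

/-- Evaluation of an integer Laurent polynomial in `d` variables at a point of `ℂᵈ`. -/
noncomputable def lEval {d : ℕ} (f : AddMonoidAlgebra ℤ (Fin d → ℤ)) (s : Fin d → ℂ) : ℂ :=
  Finsupp.sum f.coeff fun n c => (c : ℂ) * ∏ i, s i ^ (n i)

open Classical in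
/-- The Mahler measure of an integer Laurent polynomial in `d` variables:
the exponential of the average of `log |f|` over the `d`-torus; by convention `M(0) = 0`. -/
noncomputable def mahlerMeasure {d : ℕ} (f : AddMonoidAlgebra ℤ (Fin d → ℤ)) : ℝ :=
  if f = 0 then 0 else
    Real.exp (∫ t in Set.pi Set.univ (fun _ : Fin d => Set.Icc (0:ℝ) 1),
      Real.log ‖lEval f (fun i => Complex.exp (2 * (Real.pi : ℂ) * Complex.I * (t i : ℂ)))‖)

/-- The variable `u_i`, as a Laurent polynomial. -/
noncomputable def U {d : ℕ} (i : Fin d) : AddMonoidAlgebra ℤ (Fin d → ℤ) :=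
  AddMonoidAlgebra.single (Pi.single i (1:ℤ)) 1

/-- The inverse variable `u_i⁻¹`, as a Laurent polynomial. -/
noncomputable def Uinv {d : ℕ} (i : Fin d) : AddMonoidAlgebra ℤ (Fin d → ℤ) :=
  AddMonoidAlgebra.single (Pi.single i (-1:ℤ)) 1

open Real Polynomial




lemma lEval_zero {d : ℕ} (s : Fin d → ℂ) : lEval (0 : AddMonoidAlgebra ℤ (Fin d → ℤ)) s = 0 := by
  rw [lEval, AddMonoidAlgebra.coeff_zero]; exact Finsupp.sum_zero_index

lemma lEval_add {d : ℕ} (f g : AddMonoidAlgebra ℤ (Fin d → ℤ)) (s : Fin d → ℂ) :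
    lEval (f + g) s = lEval f s + lEval g s := by
  rw [lEval, lEval, lEval, AddMonoidAlgebra.coeff_add]; exact Finsupp.sum_add_index' (by simp) (by intros; push_cast; ring)

lemma lEval_sub {d : ℕ} (f g : AddMonoidAlgebra ℤ (Fin d → ℤ)) (s : Fin d → ℂ) :
    lEval (f - g) s = lEval f s - lEval g s := by
  rw [lEval, lEval, lEval, AddMonoidAlgebra.coeff_sub]; exact Finsupp.sum_sub_index (by intros; push_cast; ring)

lemma lEval_one {d : ℕ} (s : Fin d → ℂ) : lEval (1 : AddMonoidAlgebra ℤ (Fin d → ℤ)) s = 1 := by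
  have : (1 : AddMonoidAlgebra ℤ (Fin d → ℤ)) = AddMonoidAlgebra.single 0 1 := rfl
  rw [this, lEval, AddMonoidAlgebra.coeff_single, Finsupp.sum_single_index (by simp)]
  simp

lemma U_pow (n : ℕ) : (U (0 : Fin 1))^n = AddMonoidAlgebra.single (Pi.single 0 (n:ℤ)) 1 := by
  rw [U, AddMonoidAlgebra.single_pow, one_pow]
  congr 1
  funext j
  have hj : j = 0 := Subsingleton.elim j 0
  subst hj
  simp

lemma lEval_U_pow (n : ℕ) (s : Fin 1 → ℂ) : lEval ((U 0)^n) s = s 0 ^ n := by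
  rw [U_pow, lEval, AddMonoidAlgebra.coeff_single, Finsupp.sum_single_index (by simp)]
  simp [Fin.prod_univ_one, zpow_natCast]

lemma lEval_U (s : Fin 1 → ℂ) : lEval (U 0) s = s 0 := by
  simpa using lEval_U_pow 1 s

lemma lEval_P (s : Fin 1 → ℂ) :
    lEval ((1 - U 0 - (U 0)^11 + (U 0)^12 - (U 0)^13 - (U 0)^23 + (U 0)^24 :
        AddMonoidAlgebra ℤ (Fin 1 → ℤ))) s =
      1 - s 0 - s 0^11 + s 0^12 - s 0^13 - s 0^23 + s 0^24 := by
  simp [lEval_add, lEval_sub, lEval_one, lEval_U, lEval_U_pow]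

lemma lEval_L (s : Fin 1 → ℂ) :
    lEval ((1 + U 0 - (U 0)^3 - (U 0)^4 - (U 0)^5 - (U 0)^6 - (U 0)^7 +
        (U 0)^9 + (U 0)^10 : AddMonoidAlgebra ℤ (Fin 1 → ℤ))) s =
      1 + s 0 - s 0^3 - s 0^4 - s 0^5 - s 0^6 - s 0^7 + s 0^9 + s 0^10 := by
  simp [lEval_add, lEval_sub, lEval_one, lEval_U, lEval_U_pow]

lemma P_ne : ((1 - U 0 - (U 0)^11 + (U 0)^12 - (U 0)^13 - (U 0)^23 + (U 0)^24 :
    AddMonoidAlgebra ℤ (Fin 1 → ℤ))) ≠ 0 := by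
  intro h
  have := lEval_P (fun _ => (2:ℂ))
  rw [h, lEval_zero] at this
  norm_num at this

lemma L_ne : ((1 + U 0 - (U 0)^3 - (U 0)^4 - (U 0)^5 - (U 0)^6 - (U 0)^7 +
    (U 0)^9 + (U 0)^10 : AddMonoidAlgebra ℤ (Fin 1 → ℤ))) ≠ 0 := by
  intro h
  have := lEval_L (fun _ => (2:ℂ))
  rw [h, lEval_zero] at this
  norm_num at this



noncomputable def EE (t : ℝ) : ℂ := Complex.exp (2 * (Real.pi : ℂ) * Complex.I * (t : ℂ))

noncomputable def hh (t : ℝ) : ℝ := Real.log (‖EE t - 1‖)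

lemma EE_add (a b : ℝ) : EE (a + b) = EE a * EE b := by
  rw [EE, EE, EE, ← Complex.exp_add]
  push_cast
  ring_nf

lemma EE_nat_mul (n : ℕ) (t : ℝ) : EE ((n : ℝ) * t) = (EE t) ^ n := by
  rw [EE, EE, ← Complex.exp_nat_mul]
  push_cast
  ring_nf

lemma EE_one : EE 1 = 1 := by
  rw [EE]
  push_cast
  rw [mul_one]
  exact Complex.exp_two_pi_mul_I

lemma EE_half : EE 2⁻¹ = -1 := by
  rw [EE, show 2 * (Real.pi : ℂ) * Complex.I * ((2⁻¹ : ℝ) : ℂ) = (Real.pi : ℂ) * Complex.I by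
    push_cast; ring]
  exact Complex.exp_pi_mul_I

lemma EE_periodic : Function.Periodic EE 1 := by
  intro t
  rw [EE_add, EE_one, mul_one]

lemma hh_periodic : Function.Periodic hh 1 := by
  intro t
  rw [hh, hh, EE_periodic t]

lemma EE_cont : Continuous EE := by
  unfold EE
  fun_prop

lemma hh_meas : Measurable hh :=
  Real.measurable_log.comp (continuous_norm.comp (EE_cont.sub continuous_const)).measurable

lemma abs_EE_sub_one (t : ℝ) : ‖EE t - 1‖ = 2 * |Real.sin (Real.pi * t)| := by
  have h1 : EE t = Complex.exp (((2 * Real.pi * t : ℝ) : ℂ) * Complex.I) := by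
    rw [EE]; congr 1; push_cast; ring
  rw [h1, Complex.exp_mul_I]
  have : Complex.cos ((2 * Real.pi * t : ℝ) : ℂ) + Complex.sin ((2 * Real.pi * t : ℝ) : ℂ) *
      Complex.I - 1 = ((Real.cos (2 * Real.pi * t) - 1 : ℝ) : ℂ) +
      ((Real.sin (2 * Real.pi * t) : ℝ) : ℂ) * Complex.I := by
    push_cast [Complex.ofReal_cos, Complex.ofReal_sin]
    ring
  rw [this]
  rw [Complex.norm_def, Complex.normSq_add_mul_I]
  have habs : |Real.sin (Real.pi * t)| = Real.sqrt ((1 - Real.cos (2 * Real.pi * t)) / 2) := by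
    have := Real.abs_sin_half (2 * Real.pi * t)
    rw [show 2 * Real.pi * t / 2 = Real.pi * t by ring] at this
    exact this
  rw [habs]
  rw [show (Real.cos (2 * Real.pi * t) - 1) ^ 2 + Real.sin (2 * Real.pi * t) ^ 2 =
      4 * ((1 - Real.cos (2 * Real.pi * t)) / 2) by
    have := Real.sin_sq_add_cos_sq (2 * Real.pi * t); nlinarith]
  rw [Real.sqrt_mul (by norm_num : (0:ℝ) ≤ 4), show Real.sqrt 4 = 2 by
    rw [show (4:ℝ) = 2 ^ 2 by norm_num, Real.sqrt_sq (by norm_num : (0:ℝ) ≤ 2)]]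




lemma countable_fiber (a : ℂ) : Set.Countable {t : ℝ | EE t = a} := by
  by_cases h : ∃ t₀ : ℝ, EE t₀ = a
  · obtain ⟨t₀, ht₀⟩ := h
    have hsub : {t : ℝ | EE t = a} ⊆ Set.range (fun n : ℤ => t₀ + n) := by
      intro t ht
      have : EE t = EE t₀ := by rw [ht₀]; exact ht
      rw [EE, EE, Complex.exp_eq_exp_iff_exists_int] at this
      obtain ⟨n, hn⟩ := this
      refine ⟨n, ?_⟩
      have h2 : (2 * (Real.pi : ℂ) * Complex.I) * (t : ℂ) =
          (2 * (Real.pi : ℂ) * Complex.I) * ((t₀ : ℂ) + (n : ℂ)) := by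
        rw [hn]; ring
      have hne : (2 * (Real.pi : ℂ) * Complex.I) ≠ 0 := by
        simp [Real.pi_ne_zero, Complex.I_ne_zero]
      have h3 : (t : ℂ) = ((t₀ + n : ℝ) : ℂ) := by
        have := mul_left_cancel₀ hne h2
        push_cast
        rw [this]
      exact (Complex.ofReal_inj.mp h3).symm
    exact Set.Countable.mono hsub (Set.countable_range _)
  · have : {t : ℝ | EE t = a} = ∅ := by
      ext t; simp only [Set.mem_setOf_eq, Set.mem_empty_iff_false, iff_false]
      exact fun ht => h ⟨t, ht⟩
    rw [this]; exact Set.countable_empty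

lemma countable_poly_zeros (p : Polynomial ℂ) (hp : p ≠ 0) :
    Set.Countable {t : ℝ | p.eval (EE t) = 0} := by
  have hsub : {t : ℝ | p.eval (EE t) = 0} ⊆
      ⋃ a ∈ p.roots.toFinset, {t : ℝ | EE t = a} := by
    intro t ht
    simp only [Set.mem_iUnion, Set.mem_setOf_eq]
    exact ⟨EE t, Multiset.mem_toFinset.mpr ((Polynomial.mem_roots hp).mpr ht), rfl⟩
  exact Set.Countable.mono hsub
    (Set.Countable.biUnion (p.roots.toFinset : Finset ℂ).countable_toSet
      fun a _ => countable_fiber a)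

-- integrability of log on [0,1]
lemma log_int01 : IntervalIntegrable Real.log volume 0 1 := by
  have hcont : ContinuousOn (fun x : ℝ => x - x * Real.log x) (Set.Icc 0 1) :=
    (continuous_id.sub Real.continuous_mul_log).continuousOn
  have hderiv : ∀ x ∈ Set.Ioo (0:ℝ) 1, HasDerivAt (fun x : ℝ => x - x * Real.log x)
      (-Real.log x) x := by
    intro x hx
    have h1 : HasDerivAt (fun x : ℝ => x * Real.log x) (Real.log x + 1) x :=
      Real.hasDerivAt_mul_log (ne_of_gt hx.1)
    have h2 := (hasDerivAt_id x).sub h1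
    exact (h2.congr_deriv (by ring) : HasDerivAt (fun x : ℝ => x - x * Real.log x) (-Real.log x) x)
  have hpos : ∀ x ∈ Set.Ioo (0:ℝ) 1, 0 ≤ -Real.log x := by
    intro x hx
    simp only [neg_nonneg]
    exact Real.log_nonpos hx.1.le hx.2.le
  have := intervalIntegral.integrableOn_deriv_of_nonneg hcont hderiv hpos
  have h2 : IntegrableOn (fun x => - Real.log x) (Set.Ioc (0:ℝ) 1) volume := this
  have h3 : IntegrableOn Real.log (Set.Ioc (0:ℝ) 1) volume := by
    have h4 := h2.neg
    have : (-fun x : ℝ => -Real.log x) = Real.log := by funext x; simp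
    rwa [this] at h4
  rw [intervalIntegrable_iff_integrableOn_Ioc_of_le zero_le_one]
  exact h3





lemma log4t_int : IntervalIntegrable (fun t : ℝ => Real.log (4 * t)) volume 0 1 := by
  have h14 : IntervalIntegrable Real.log volume 1 4 :=
    intervalIntegral.intervalIntegrable_log (by rw [Set.uIcc_of_le (by norm_num : (1:ℝ) ≤ 4)]; norm_num)
  have h04 : IntervalIntegrable Real.log volume 0 4 := log_int01.trans h14
  have := h04.comp_mul_left (c := 4)
  norm_num at this
  exact this

lemma log4st_int : IntervalIntegrable (fun t : ℝ => Real.log (4 * (1 - t))) volume 0 1 := by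
  have := log4t_int.comp_sub_left 1
  norm_num at this
  exact this.symm

lemma two_mul_le_sin {u : ℝ} (h0 : 0 ≤ u) (h1 : u ≤ 1/2) : 2 * u ≤ Real.sin (Real.pi * u) := by
  have := Real.mul_le_sin (x := Real.pi * u) (by positivity)
    (by nlinarith [Real.pi_pos])
  have hpi := Real.pi_pos
  rw [show 2 / Real.pi * (Real.pi * u) = 2 * u by field_simp] at this
  exact this

lemma sin_pi_mul_nonneg {t : ℝ} (h0 : 0 ≤ t) (h1 : t ≤ 1) : 0 ≤ Real.sin (Real.pi * t) :=
  Real.sin_nonneg_of_nonneg_of_le_pi (by positivity)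
    (by nlinarith [Real.pi_pos])

lemma hh_bound {t : ℝ} (ht0 : 0 < t) (ht1 : t ≤ 1) :
    |hh t| ≤ |Real.log (4 * t)| + |Real.log (4 * (1 - t))| + Real.log 2 := by
  have hsin : |Real.sin (Real.pi * t)| = Real.sin (Real.pi * t) :=
    abs_of_nonneg (sin_pi_mul_nonneg ht0.le ht1)
  have hhval : hh t = Real.log (2 * Real.sin (Real.pi * t)) := by
    rw [hh, abs_EE_sub_one, hsin]
  have hlog2 : (0:ℝ) ≤ Real.log 2 := Real.log_nonneg (by norm_num)
  have ha1 : (0:ℝ) ≤ |Real.log (4 * t)| := abs_nonneg _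
  have ha2 : (0:ℝ) ≤ |Real.log (4 * (1 - t))| := abs_nonneg _
  -- upper bound
  have hub : hh t ≤ Real.log 2 := by
    rw [hhval]
    rcases eq_or_lt_of_le (sin_pi_mul_nonneg ht0.le ht1) with h | h
    · rw [← h, mul_zero, Real.log_zero]; exact hlog2
    · exact Real.log_le_log (by linarith)
        (by nlinarith [Real.sin_le_one (Real.pi * t)])
  -- lower bound
  have hlb : -(|Real.log (4 * t)| + |Real.log (4 * (1 - t))|) ≤ hh t := by
    rcases eq_or_lt_of_le ht1 with h1 | h1
    · subst h1
      have : hh 1 = 0 := by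
        rw [hhval]; simp [Real.sin_pi]
      rw [this]; linarith
    · rcases le_or_gt t (1/2) with h2 | h2
      · have hs := two_mul_le_sin ht0.le h2
        have h4t : Real.log (4 * t) ≤ hh t := by
          rw [hhval]
          exact Real.log_le_log (by linarith) (by linarith)
        have := neg_abs_le (Real.log (4 * t))
        linarith
      · have hs' := two_mul_le_sin (u := 1 - t) (by linarith) (by linarith)
        have hsin2 : Real.sin (Real.pi * (1 - t)) = Real.sin (Real.pi * t) := by
          rw [show Real.pi * (1 - t) = Real.pi - Real.pi * t by ring, Real.sin_pi_sub]
        rw [hsin2] at hs'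
        have h4t : Real.log (4 * (1 - t)) ≤ hh t := by
          rw [hhval]
          exact Real.log_le_log (by linarith) (by linarith)
        have := neg_abs_le (Real.log (4 * (1 - t)))
        linarith
  rw [abs_le]
  constructor <;> linarith

lemma hh_int : IntervalIntegrable hh volume 0 1 := by
  have hDint : IntervalIntegrable
      (fun t : ℝ => |Real.log (4 * t)| + |Real.log (4 * (1 - t))| + Real.log 2) volume 0 1 :=
    (log4t_int.abs.add log4st_int.abs).add intervalIntegrable_const
  refine hDint.mono_fun' (hh_meas.aestronglyMeasurable) ?_
  rw [Filter.EventuallyLE, ae_restrict_iff' measurableSet_uIoc]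
  refine Filter.Eventually.of_forall ?_
  intro t ht
  rw [Set.uIoc_of_le (by norm_num : (0:ℝ) ≤ 1)] at ht
  exact hh_bound ht.1 ht.2





lemma hh_int_all : ∀ a b : ℝ, IntervalIntegrable hh volume a b := by
  have hint : ∀ (k : ℤ), IntervalIntegrable hh volume k (k + 1) := by
    intro k
    have h := hh_int.comp_sub_right (k : ℝ)
    have he : (fun x : ℝ => hh (x - (k : ℝ))) = hh := by
      funext x
      have := hh_periodic.sub_int_mul_eq (x := x) k
      rw [mul_one] at this
      exact this
    rw [he] at h
    have : (0:ℝ) + (k:ℝ) = k := by ring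
    simpa [this, add_comm] using h
  have hstep : ∀ (k : ℤ) (m : ℕ), IntervalIntegrable hh volume k (k + m) := by
    intro k m
    induction m with
    | zero => simp
    | succ n ih =>
      have h2 : IntervalIntegrable hh volume ((k : ℝ) + n) ((k : ℝ) + n + 1) := by
        have := hint (k + n)
        push_cast at this
        exact this
      have h3 := ih.trans h2
      have he : ((k:ℝ) + n + 1) = (k:ℝ) + ((n+1 : ℕ) : ℝ) := by push_cast; ring
      rwa [he] at h3
  intro a b
  wlog hab : a ≤ b generalizing a b
  · exact (this b a (le_of_not_ge hab)).symm
  have h1 : ((⌊a⌋ : ℝ)) ≤ a := Int.floor_le a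
  set m : ℕ := (⌈b⌉ - ⌊a⌋).toNat with hm
  have h2 : b ≤ (⌊a⌋ : ℝ) + m := by
    have hcb : b ≤ (⌈b⌉ : ℝ) := Int.le_ceil b
    have hfc : ⌊a⌋ ≤ ⌈b⌉ :=
      le_trans (Int.floor_le_floor hab) (Int.floor_le_ceil b)
    have hmm : (m : ℤ) = ⌈b⌉ - ⌊a⌋ := Int.toNat_of_nonneg (by omega)
    have : ((⌊a⌋ : ℝ)) + (m : ℝ) = ((⌈b⌉ : ℤ) : ℝ) := by
      have := congrArg (fun z : ℤ => (z : ℝ)) hmm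
      push_cast at this ⊢
      linarith
    linarith
  exact (hstep ⌊a⌋ m).mono_set (by
    rw [Set.uIcc_of_le hab, Set.uIcc_of_le (by linarith)]
    exact Set.Icc_subset_Icc h1 h2)





lemma key_int (n : ℕ) (hn : 0 < n) (c : ℝ) :
    IntervalIntegrable (fun t : ℝ => hh ((n : ℝ) * t + c)) volume 0 1 := by
  have hg : IntervalIntegrable (fun s : ℝ => hh (s + c)) volume 0 n := by
    have := (hh_int_all c ((n : ℝ) + c)).comp_add_right c
    simpa using this
  have := hg.comp_mul_left (c := (n : ℝ))
  have hne : (n : ℝ) ≠ 0 := Nat.cast_ne_zero.mpr hn.ne'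
  rw [zero_div, div_self hne] at this
  exact this

lemma key_val (n : ℕ) (hn : 0 < n) (c : ℝ) :
    ∫ t in (0:ℝ)..1, hh ((n : ℝ) * t + c) = ∫ t in (0:ℝ)..1, hh t := by
  have hne : (n : ℝ) ≠ 0 := Nat.cast_ne_zero.mpr hn.ne'
  rw [intervalIntegral.integral_comp_mul_left (fun s => hh (s + c)) hne]
  rw [mul_zero, mul_one]
  rw [intervalIntegral.integral_comp_add_right (fun s => hh s) c]
  rw [zero_add]
  have hz : ((n : ℝ) + c) = c + (n : ℤ) • (1:ℝ) := by rw [zsmul_eq_mul]; push_cast; ring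
  rw [hz, hh_periodic.intervalIntegral_add_zsmul_eq (n : ℤ) c hh_int_all]
  rw [hh_periodic.intervalIntegral_add_eq c 0, zero_add]
  rw [zsmul_eq_mul, smul_eq_mul]
  push_cast
  field_simp

lemma bad2_null : volume {t : ℝ | EE t = 1 ∨ EE t = -1} = 0 := by
  have : {t : ℝ | EE t = 1 ∨ EE t = -1} = {t : ℝ | EE t = 1} ∪ {t : ℝ | EE t = -1} := by
    ext t; simp [Set.mem_union]
  rw [this]
  exact Set.Countable.measure_zero ((countable_fiber 1).union (countable_fiber (-1))) _

lemma abs_EE_add_one (t : ℝ) : ‖EE t + 1‖ = ‖EE (t + 2⁻¹) - 1‖ := by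
  rw [EE_add, EE_half]
  rw [show EE t * (-1) - 1 = -(EE t + 1) by ring]
  exact (norm_neg _).symm

lemma hh_integral_zero : ∫ t in (0:ℝ)..1, hh t = 0 := by
  set I := ∫ t in (0:ℝ)..1, hh t with hI
  have e1 : ∫ t in (0:ℝ)..1, hh (2 * t) = I := by
    have := key_val 2 (by norm_num) 0
    push_cast at this
    simpa using this
  have e2 : ∫ t in (0:ℝ)..1, hh (t + 2⁻¹) = I := by
    have := key_val 1 (by norm_num) 2⁻¹
    push_cast at this
    simpa using this
  have i2 : IntervalIntegrable (fun t : ℝ => hh (t + 2⁻¹)) volume 0 1 := by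
    have := key_int 1 (by norm_num) 2⁻¹
    push_cast at this
    simpa using this
  have hae : ∀ᵐ t : ℝ, hh (2 * t) = hh t + hh (t + 2⁻¹) := by
    have : ∀ᵐ t : ℝ, t ∉ {t : ℝ | EE t = 1 ∨ EE t = -1} :=
      (MeasureTheory.measure_eq_zero_iff_ae_notMem).mp bad2_null
    filter_upwards [this] with t ht
    push_neg at ht
    obtain ⟨h1, h2⟩ := ht
    have hz1 : EE t - 1 ≠ 0 := sub_ne_zero.mpr h1
    have hz2 : EE t + 1 ≠ 0 := by
      intro h; exact h2 (by linear_combination h)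
    have hfac : EE (2 * t) - 1 = (EE t - 1) * (EE t + 1) := by
      have h2t : EE (2 * t) = EE t ^ 2 := by
        have := EE_nat_mul 2 t
        push_cast at this
        exact this
      rw [h2t]; ring
    rw [hh, hh, hfac, norm_mul, Real.log_mul (norm_ne_zero_iff.mpr hz1) (norm_ne_zero_iff.mpr hz2)]
    congr 1
    rw [hh, ← abs_EE_add_one]
  have congr1 : ∫ t in (0:ℝ)..1, hh (2 * t) = ∫ t in (0:ℝ)..1, (hh t + hh (t + 2⁻¹)) := by
    apply intervalIntegral.integral_congr_ae
    filter_upwards [hae] with t ht _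
    exact ht
  rw [intervalIntegral.integral_add hh_int i2, e1, e2] at congr1
  linarith





noncomputable def Wpoly : Polynomial ℂ :=
  (X - 1) * (X + 1) * (X^3 - 1) * (X^5 - 1) * (X^7 + 1) * (X^15 - 1) *
    (1 + X - X^3 - X^4 - X^5 - X^6 - X^7 + X^9 + X^10)

lemma Wpoly_ne : Wpoly ≠ 0 := by
  intro h
  have h2 : Wpoly.eval 2 = 0 := by rw [h]; simp
  rw [Wpoly] at h2
  simp only [eval_mul, eval_add, eval_sub, eval_pow, eval_one, eval_X] at h2
  norm_num at h2

noncomputable def SS (t : ℝ) : ℝ :=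
  hh (7*t + 2⁻¹) + hh (15*t) + hh t - hh (t + 2⁻¹) - hh (5*t) - hh (3*t)

lemma SS_int : IntervalIntegrable SS volume 0 1 := by
  have k7 : IntervalIntegrable (fun t : ℝ => hh (7*t + 2⁻¹)) volume 0 1 := by
    have := key_int 7 (by norm_num) 2⁻¹; push_cast at this; exact this
  have k15 : IntervalIntegrable (fun t : ℝ => hh (15*t)) volume 0 1 := by
    have := key_int 15 (by norm_num) 0; push_cast at this; simpa using this
  have k1 : IntervalIntegrable (fun t : ℝ => hh t) volume 0 1 := hh_int
  have ksh : IntervalIntegrable (fun t : ℝ => hh (t + 2⁻¹)) volume 0 1 := by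
    have := key_int 1 (by norm_num) 2⁻¹; push_cast at this; simpa using this
  have k5 : IntervalIntegrable (fun t : ℝ => hh (5*t)) volume 0 1 := by
    have := key_int 5 (by norm_num) 0; push_cast at this; simpa using this
  have k3 : IntervalIntegrable (fun t : ℝ => hh (3*t)) volume 0 1 := by
    have := key_int 3 (by norm_num) 0; push_cast at this; simpa using this
  exact ((((k7.add k15).add k1).sub ksh).sub k5).sub k3

lemma SS_integral_zero : ∫ t in (0:ℝ)..1, SS t = 0 := by
  have k7 : ∫ t in (0:ℝ)..1, hh (7*t + 2⁻¹) = 0 := by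
    have := key_val 7 (by norm_num) 2⁻¹; push_cast at this
    rw [this, hh_integral_zero]
  have k15 : ∫ t in (0:ℝ)..1, hh (15*t) = 0 := by
    have := key_val 15 (by norm_num) 0; push_cast at this
    simp only [add_zero] at this; rw [this, hh_integral_zero]
  have ksh : ∫ t in (0:ℝ)..1, hh (t + 2⁻¹) = 0 := by
    have := key_val 1 (by norm_num) 2⁻¹; push_cast at this
    simp only [one_mul] at this; rw [this, hh_integral_zero]
  have k5 : ∫ t in (0:ℝ)..1, hh (5*t) = 0 := by
    have := key_val 5 (by norm_num) 0; push_cast at this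
    simp only [add_zero] at this; rw [this, hh_integral_zero]
  have k3 : ∫ t in (0:ℝ)..1, hh (3*t) = 0 := by
    have := key_val 3 (by norm_num) 0; push_cast at this
    simp only [add_zero] at this; rw [this, hh_integral_zero]
  have k7' : IntervalIntegrable (fun t : ℝ => hh (7*t + 2⁻¹)) volume 0 1 := by
    have := key_int 7 (by norm_num) 2⁻¹; push_cast at this; exact this
  have k15' : IntervalIntegrable (fun t : ℝ => hh (15*t)) volume 0 1 := by
    have := key_int 15 (by norm_num) 0; push_cast at this; simpa using this
  have ksh' : IntervalIntegrable (fun t : ℝ => hh (t + 2⁻¹)) volume 0 1 := by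
    have := key_int 1 (by norm_num) 2⁻¹; push_cast at this; simpa using this
  have k5' : IntervalIntegrable (fun t : ℝ => hh (5*t)) volume 0 1 := by
    have := key_int 5 (by norm_num) 0; push_cast at this; simpa using this
  have k3' : IntervalIntegrable (fun t : ℝ => hh (3*t)) volume 0 1 := by
    have := key_int 3 (by norm_num) 0; push_cast at this; simpa using this
  unfold SS
  rw [intervalIntegral.integral_sub ((((k7'.add k15').add hh_int).sub ksh').sub k5') k3',
      intervalIntegral.integral_sub (((k7'.add k15').add hh_int).sub ksh') k5',
      intervalIntegral.integral_sub ((k7'.add k15').add hh_int) ksh',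
      intervalIntegral.integral_add (k7'.add k15') hh_int,
      intervalIntegral.integral_add k7' k15']
  rw [k7, k15, hh_integral_zero, ksh, k5, k3]
  ring

lemma pointwise_id {t : ℝ} (ht : Wpoly.eval (EE t) ≠ 0) :
    Real.log (‖1 - EE t - EE t^11 + EE t^12 - EE t^13 - EE t^23 + EE t^24‖) =
    Real.log (‖1 + EE t - EE t^3 - EE t^4 - EE t^5 - EE t^6 - EE t^7 +
      EE t^9 + EE t^10‖) + SS t := by
  set z := EE t with hz
  rw [Wpoly] at ht
  simp only [eval_mul, eval_add, eval_sub, eval_pow, eval_one, eval_X] at ht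
  have h1 : z - 1 ≠ 0 := fun h => ht (by rw [h]; ring)
  have h2 : z + 1 ≠ 0 := fun h => ht (by rw [h]; ring)
  have h3 : z^3 - 1 ≠ 0 := fun h => ht (by rw [h]; ring)
  have h5 : z^5 - 1 ≠ 0 := fun h => ht (by rw [h]; ring)
  have h7 : z^7 + 1 ≠ 0 := fun h => ht (by rw [h]; ring)
  have h15 : z^15 - 1 ≠ 0 := fun h => ht (by rw [h]; ring)
  have hL : 1 + z - z^3 - z^4 - z^5 - z^6 - z^7 + z^9 + z^10 ≠ 0 :=
    fun h => ht (by rw [h]; ring)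
  have hF : (1 - z - z^11 + z^12 - z^13 - z^23 + z^24) *
      ((z + 1) * ((z^5 - 1) * (z^3 - 1))) =
      (1 + z - z^3 - z^4 - z^5 - z^6 - z^7 + z^9 + z^10) *
      ((z^7 + 1) * ((z^15 - 1) * (z - 1))) := by ring
  -- identify SS terms with logs
  have t7 : hh (7*t + 2⁻¹) = Real.log (‖z^7 + 1‖) := by
    rw [hh, EE_add, EE_half]
    have : EE (7*t) = z^7 := by
      have := EE_nat_mul 7 t; push_cast at this; rw [← hz] at this; exact this
    rw [this, show z^7 * (-1) - 1 = -(z^7+1) by ring, norm_neg]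
  have t15 : hh (15*t) = Real.log (‖z^15 - 1‖) := by
    rw [hh]
    have : EE (15*t) = z^15 := by
      have := EE_nat_mul 15 t; push_cast at this; rw [← hz] at this; exact this
    rw [this]
  have t1 : hh t = Real.log (‖z - 1‖) := by rw [hh, ← hz]
  have tsh : hh (t + 2⁻¹) = Real.log (‖z + 1‖) := by
    rw [hh, ← abs_EE_add_one, ← hz]
  have t5 : hh (5*t) = Real.log (‖z^5 - 1‖) := by
    rw [hh]
    have : EE (5*t) = z^5 := by
      have := EE_nat_mul 5 t; push_cast at this; rw [← hz] at this; exact this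
    rw [this]
  have t3 : hh (3*t) = Real.log (‖z^3 - 1‖) := by
    rw [hh]
    have : EE (3*t) = z^3 := by
      have := EE_nat_mul 3 t; push_cast at this; rw [← hz] at this; exact this
    rw [this]
  -- abs identity and logs
  have habs := congrArg (‖·‖) hF
  rw [norm_mul, norm_mul, norm_mul, norm_mul, norm_mul, norm_mul] at habs
  have hFne : (1 - z - z^11 + z^12 - z^13 - z^23 + z^24) ≠ 0 := by
    intro h
    rw [h, zero_mul] at hF
    exact (mul_ne_zero hL (mul_ne_zero h7 (mul_ne_zero h15 h1))) hF.symm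
  have habsne : ∀ w : ℂ, w ≠ 0 → ‖w‖ ≠ 0 := fun w hw => norm_ne_zero_iff.mpr hw
  have hlog := congrArg Real.log habs
  rw [Real.log_mul (habsne _ hFne) (by
        exact mul_ne_zero (habsne _ h2) (mul_ne_zero (habsne _ h5) (habsne _ h3))),
      Real.log_mul (habsne _ h2) (mul_ne_zero (habsne _ h5) (habsne _ h3)),
      Real.log_mul (habsne _ h5) (habsne _ h3),
      Real.log_mul (habsne _ hL) (by
        exact mul_ne_zero (habsne _ h7) (mul_ne_zero (habsne _ h15) (habsne _ h1))),
      Real.log_mul (habsne _ h7) (mul_ne_zero (habsne _ h15) (habsne _ h1)),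
      Real.log_mul (habsne _ h15) (habsne _ h1)] at hlog
  rw [SS, t7, t15, t1, tsh, t5, t3]
  linarith





lemma reduce (f : AddMonoidAlgebra ℤ (Fin 1 → ℤ)) :
    (∫ t in Set.pi Set.univ (fun _ : Fin 1 => Set.Icc (0:ℝ) 1),
      Real.log (‖lEval f (fun i =>
        Complex.exp (2 * (Real.pi : ℂ) * Complex.I * (t i : ℂ)))‖)) =
    ∫ x in (0:ℝ)..1, Real.log (‖lEval f (fun _ => EE x)‖) := by
  refine (((volume_preserving_funUnique (Fin 1) ℝ).symm _).setIntegral_preimage_emb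
      (MeasurableEquiv.measurableEmbedding _) _ _).symm.trans ?_
  have hpre : ((MeasurableEquiv.funUnique (Fin 1) ℝ).symm) ⁻¹'
      (Set.pi Set.univ (fun _ : Fin 1 => Set.Icc (0:ℝ) 1)) = Set.Icc (0:ℝ) 1 := by
    ext x
    simp [Set.mem_pi, MeasurableEquiv.funUnique, Equiv.funUnique, Pi.le_def, Unique.forall_iff, uniqueElim]
  rw [hpre, intervalIntegral.integral_of_le zero_le_one, integral_Icc_eq_integral_Ioc]
  apply setIntegral_congr_fun measurableSet_Ioc
  intro x _
  rfl

lemma main_interval :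
    (∫ t in (0:ℝ)..1, Real.log (‖1 - EE t - EE t^11 + EE t^12 - EE t^13 - EE t^23 + EE t^24‖)) =
    ∫ t in (0:ℝ)..1, Real.log (‖1 + EE t - EE t^3 - EE t^4 - EE t^5 - EE t^6 - EE t^7 + EE t^9 + EE t^10‖) := by
  set φ : ℝ → ℝ := fun t => Real.log (‖1 - EE t - EE t^11 + EE t^12 - EE t^13 - EE t^23 + EE t^24‖) with hφ
  set ψ : ℝ → ℝ := fun t => Real.log (‖1 + EE t - EE t^3 - EE t^4 - EE t^5 - EE t^6 - EE t^7 + EE t^9 + EE t^10‖) with hψ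
  have hB : volume {t : ℝ | Wpoly.eval (EE t) = 0} = 0 :=
    Set.Countable.measure_zero (countable_poly_zeros Wpoly Wpoly_ne) _
  have hae : ∀ᵐ t : ℝ, φ t = ψ t + SS t := by
    have hnm : ∀ᵐ t : ℝ, t ∉ {t : ℝ | Wpoly.eval (EE t) = 0} :=
      (MeasureTheory.measure_eq_zero_iff_ae_notMem).mp hB
    filter_upwards [hnm] with t ht
    exact pointwise_id ht
  have e1 : ∫ t in (0:ℝ)..1, φ t = ∫ t in (0:ℝ)..1, (ψ t + SS t) := by
    apply intervalIntegral.integral_congr_ae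
    filter_upwards [hae] with t ht _
    exact ht
  by_cases hψi : IntervalIntegrable ψ volume 0 1
  · rw [e1, intervalIntegral.integral_add hψi SS_int, SS_integral_zero, add_zero]
  · have h2 : ¬ IntervalIntegrable (fun t => ψ t + SS t) volume 0 1 := by
      intro h
      apply hψi
      have := h.sub SS_int
      simpa using this
    rw [e1, intervalIntegral.integral_undef h2, intervalIntegral.integral_undef hψi]

/-- **Example 5.1.**  The Mahler measure of
`1 − u − u¹¹ + u¹² − u¹³ − u²³ + u²⁴` (which is `Δ_{7²₁}(u, u¹¹)`) equals the Mahler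
measure of Lehmer's polynomial `L(u) = 1 + u − u³ − u⁴ − u⁵ − u⁶ − u⁷ + u⁹ + u¹⁰`. -/
theorem mahler_lehmer_from_link :
    mahlerMeasure ((1 - U 0 - (U 0)^11 + (U 0)^12 - (U 0)^13 - (U 0)^23 + (U 0)^24 :
        AddMonoidAlgebra ℤ (Fin 1 → ℤ))) =
    mahlerMeasure ((1 + U 0 - (U 0)^3 - (U 0)^4 - (U 0)^5 - (U 0)^6 - (U 0)^7 +
        (U 0)^9 + (U 0)^10 : AddMonoidAlgebra ℤ (Fin 1 → ℤ))) := by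
  rw [_root_.mahlerMeasure, _root_.mahlerMeasure, if_neg P_ne, if_neg L_ne]
  refine congrArg Real.exp ?_
  rw [reduce, reduce]
  have hP : (fun x : ℝ => Real.log (‖lEval
      ((1 - U 0 - (U 0)^11 + (U 0)^12 - (U 0)^13 - (U 0)^23 + (U 0)^24 :
        AddMonoidAlgebra ℤ (Fin 1 → ℤ))) (fun _ => EE x)‖)) =
      fun t : ℝ => Real.log (‖1 - EE t - EE t^11 + EE t^12 - EE t^13 - EE t^23 + EE t^24‖) := by
    funext x
    rw [lEval_P]
  have hL : (fun x : ℝ => Real.log (‖lEval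
      ((1 + U 0 - (U 0)^3 - (U 0)^4 - (U 0)^5 - (U 0)^6 - (U 0)^7 +
        (U 0)^9 + (U 0)^10 : AddMonoidAlgebra ℤ (Fin 1 → ℤ))) (fun _ => EE x)‖)) =
      fun t : ℝ => Real.log (‖1 + EE t - EE t^3 - EE t^4 - EE t^5 - EE t^6 - EE t^7 + EE t^9 + EE t^10‖) := by
    funext x
    rw [lEval_L]
  simp only [hP, hL]
  exact main_interval
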